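/- Let n ≥ 3 be odd, S = {a, a^{-1}, a^2 b, b} ⊆ D_{2n}, and Γ = Cay(D_{2n}, S). Then Aut(Γ) = K R(D_{2n}), where K ≅ Z_2^n is the kernel of the action of Aut(Γ) on the partition {⟨ab⟩ a^i : 0 ≤ i ≤ n-1}, K ∩ R(D_{2n}) = 1, and in particular |Aut(Γ)| = 2^{n+1} n and Aut(Γ) is soluble. -/

import Mathlib

open DihedralGroup Pointwise

/-- The automorphism group of the Cayley (di)graph `Cay(G,S)`, as a subgroup of `Sym(G)`. -/
def cayleyAut (G : Type*) [Group G] (S : Set G) : Subgroup (Equiv.Perm G) where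
  carrier := {f | ∀ x y : G, y * x⁻¹ ∈ S ↔ f y * (f x)⁻¹ ∈ S}
  one_mem' := by intro x y; rfl
  mul_mem' := by
    intro f g hf hg x y
    exact (hg x y).trans (hf (g x) (g y))
  inv_mem' := by
    intro f hf x y
    have h := hf (f⁻¹ x) (f⁻¹ y)
    simpa using h.symm

/-- The right regular representation of `G` in `Sym(G)`, as a homomorphism. -/
def rightRegHom (G : Type*) [Group G] : G →* Equiv.Perm G where
  toFun g := Equiv.mulRight g⁻¹
  map_one' := by ext x; simp
  map_mul' a b := by ext x; simp [mul_assoc]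

/-- The subgroup `R(G) ≤ Sym(G)` of all right translations. -/
def rightRegRep (G : Type*) [Group G] : Subgroup (Equiv.Perm G) := (rightRegHom G).range

/-- `S = {a, a⁻¹, a²b, b}`. -/
def stdS (n : ℕ) : Set (DihedralGroup n) :=
  {DihedralGroup.r 1, (DihedralGroup.r 1)⁻¹,
    DihedralGroup.r 1 ^ 2 * DihedralGroup.sr 0, DihedralGroup.sr 0}

/-- The block `⟨ab⟩aⁱ = {aⁱ, ab·aⁱ}`. -/
def block (n : ℕ) (i : ZMod n) : Set (DihedralGroup n) :=
  {DihedralGroup.r i, DihedralGroup.r 1 * DihedralGroup.sr 0 * DihedralGroup.r i}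

/-- The kernel `K` of the action of `Aut(Γ)` on the partition `{⟨ab⟩aⁱ : i}`:
automorphisms fixing every block setwise. -/
def blockKernel (n : ℕ) : Subgroup (Equiv.Perm (DihedralGroup n)) :=
  cayleyAut (DihedralGroup n) (stdS n) ⊓
    ⨅ i : ZMod n, MulAction.stabilizer (Equiv.Perm (DihedralGroup n)) (block n i)


namespace CayAux

variable {n : ℕ}

/-- The "block index" of an element of the dihedral group. -/
def idx : DihedralGroup n → ZMod n
  | .r i => i
  | .sr j => j + 1

/-- The other element of the block of `x`. -/
def tw : DihedralGroup n → DihedralGroup n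
  | .r i => .sr (i - 1)
  | .sr j => .r (j + 1)

@[simp] lemma idx_r (i : ZMod n) : idx (r i) = i := rfl
@[simp] lemma idx_sr (j : ZMod n) : idx (sr j) = j + 1 := rfl
@[simp] lemma idx_one : idx (1 : DihedralGroup n) = 0 := rfl
@[simp] lemma tw_r (i : ZMod n) : tw (r i) = sr (i - 1) := rfl
@[simp] lemma tw_sr (j : ZMod n) : tw (sr j) = r (j + 1) := rfl

@[simp] lemma idx_tw (x : DihedralGroup n) : idx (tw x) = idx x := by
  cases x <;> simp [sub_add_cancel]

@[simp] lemma tw_tw (x : DihedralGroup n) : tw (tw x) = x := by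
  cases x <;> simp

lemma tw_ne (x : DihedralGroup n) : tw x ≠ x := by
  cases x <;> simp

lemma eq_or_eq_tw_of_idx_eq {x y : DihedralGroup n} (h : idx y = idx x) : y = x ∨ y = tw x := by
  cases x with
  | r i =>
    cases y with
    | r j => left; simp only [idx_r] at h; rw [h]
    | sr j =>
      right; simp only [idx_r, idx_sr] at h
      rw [tw_r]; congr 1; linear_combination h
  | sr i =>
    cases y with
    | r j =>
      right; simp only [idx_r, idx_sr] at h
      rw [tw_sr, h]
    | sr j =>
      left; simp only [idx_sr] at h; congr 1; linear_combination h

/-- The adjacency relation of the Cayley graph, purely in terms of `idx`. -/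
def adj (x y : DihedralGroup n) : Prop :=
  idx y - idx x = 1 ∨ idx y - idx x = -1

lemma stdS_eq : stdS n = {r 1, r (-1), sr (-2), sr 0} := by
  have h1 : ((r 1 : DihedralGroup n))⁻¹ = r (-1) := rfl
  have h2 : (r 1 : DihedralGroup n) ^ 2 * sr 0 = sr (-2) := by
    rw [pow_two, r_mul_r, r_mul_sr]
    norm_num
  rw [stdS, h1, h2]

lemma adj_iff (x y : DihedralGroup n) : y * x⁻¹ ∈ stdS n ↔ adj x y := by
  rw [stdS_eq]
  have hinvr : ∀ i : ZMod n, (r i)⁻¹ = r (-i) := fun _ => rfl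
  have hinvsr : ∀ i : ZMod n, (sr i)⁻¹ = sr i := fun _ => rfl
  cases x with
  | r i =>
    cases y with
    | r j =>
      rw [hinvr, r_mul_r]
      simp only [adj, idx_r, Set.mem_insert_iff, Set.mem_singleton_iff]
      constructor
      · rintro (h | h | h | h) <;> simp_all
        · left; linear_combination h
        · right; linear_combination h
      · rintro (h | h)
        · left; congr 1; linear_combination h
        · right; left; congr 1; linear_combination h
    | sr j =>
      rw [hinvr, sr_mul_r]
      simp only [adj, idx_r, idx_sr, Set.mem_insert_iff, Set.mem_singleton_iff]
      constructor
      · rintro (h | h | h | h) <;> simp_all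
        · right; linear_combination h
        · left; linear_combination h
      · rintro (h | h)
        · right; right; right; congr 1; linear_combination h
        · right; right; left; congr 1; linear_combination h
  | sr i =>
    cases y with
    | r j =>
      rw [hinvsr, r_mul_sr]
      simp only [adj, idx_r, idx_sr, Set.mem_insert_iff, Set.mem_singleton_iff]
      constructor
      · rintro (h | h | h | h) <;> simp_all
        · left; linear_combination -h
        · right; linear_combination -h
      · rintro (h | h)
        · right; right; left; congr 1; linear_combination -h
        · right; right; right; congr 1; linear_combination -h
    | sr j =>
      rw [hinvsr, sr_mul_sr]
      simp only [adj, idx_sr, Set.mem_insert_iff, Set.mem_singleton_iff]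
      constructor
      · rintro (h | h | h | h) <;> simp_all
        · right; linear_combination -h
        · left; linear_combination -h
      · rintro (h | h)
        · right; left; congr 1; linear_combination -h
        · left; congr 1; linear_combination -h

end CayAux

namespace CayAux

variable {n : ℕ}

lemma neZero_of_three_le (hn : 3 ≤ n) : NeZero n := ⟨by omega⟩

lemma two_ne_zero' (hn : 3 ≤ n) : (2 : ZMod n) ≠ 0 := by
  haveI := neZero_of_three_le hn
  intro h
  have h2 : ((2 : ℕ) : ZMod n) = 0 := by exact_mod_cast h
  rw [ZMod.natCast_eq_zero_iff] at h2
  have := Nat.le_of_dvd (by norm_num) h2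
  omega

lemma neg_one_ne_one' (hn : 3 ≤ n) : (-1 : ZMod n) ≠ 1 := by
  intro h
  exact two_ne_zero' hn (by linear_combination -h)

lemma four_ne_zero' (hn : 3 ≤ n) (hodd : Odd n) : (4 : ZMod n) ≠ 0 := by
  haveI := neZero_of_three_le hn
  intro h
  have h2 : ((4 : ℕ) : ZMod n) = 0 := by exact_mod_cast h
  rw [ZMod.natCast_eq_zero_iff] at h2
  have hle := Nat.le_of_dvd (by norm_num) h2
  interval_cases n
  · exact absurd h2 (by decide)
  · exact absurd hodd (by decide)

lemma mem_cayleyAut_iff {f : Equiv.Perm (DihedralGroup n)} :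
    f ∈ cayleyAut (DihedralGroup n) (stdS n) ↔ ∀ x y, adj x y ↔ adj (f x) (f y) := by
  constructor
  · intro hf x y
    rw [← adj_iff, ← adj_iff]; exact hf x y
  · intro hf x y
    rw [adj_iff, adj_iff]; exact hf x y

/-- Automorphisms respect blocks. -/
lemma idx_apply_eq (hn : 3 ≤ n) (hodd : Odd n) {f : Equiv.Perm (DihedralGroup n)}
    (hf : f ∈ cayleyAut (DihedralGroup n) (stdS n)) {x y : DihedralGroup n}
    (h : idx x = idx y) : idx (f x) = idx (f y) := by
  have hA := mem_cayleyAut_iff.mp hf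
  by_contra hne
  set p := idx (f x) with hp
  set q := idx (f y) with hq
  have hx1 : adj x (f.symm (r (p + 1))) := by
    rw [hA, Equiv.apply_symm_apply]
    left; simp [hp]
  have hx2 : adj x (f.symm (r (p - 1))) := by
    rw [hA, Equiv.apply_symm_apply]
    right; simp [hp]
  have hy1 : adj y (f.symm (r (p + 1))) := by
    rcases hx1 with h1 | h1
    · left; rw [← h]; exact h1
    · right; rw [← h]; exact h1
  have hy2 : adj y (f.symm (r (p - 1))) := by
    rcases hx2 with h1 | h1
    · left; rw [← h]; exact h1
    · right; rw [← h]; exact h1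
  rw [hA, Equiv.apply_symm_apply] at hy1 hy2
  apply four_ne_zero' hn hodd
  rcases hy1 with h1 | h1 <;> rcases hy2 with h2 | h2 <;>
    simp only [idx_r, ← hq] at h1 h2
  · exact absurd (by linear_combination h1) hne
  · exact absurd (by linear_combination h1) hne
  · linear_combination h1 - h2
  · exact absurd (by linear_combination h2) hne
end CayAux

namespace CayAux

variable {n : ℕ}

/-- The master structure lemma: every automorphism acts affinely on block indices. -/
lemma master (hn : 3 ≤ n) (hodd : Odd n) {f : Equiv.Perm (DihedralGroup n)}
    (hf : f ∈ cayleyAut (DihedralGroup n) (stdS n)) :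
    ∃ ε c0 : ZMod n, (ε = 1 ∨ ε = -1) ∧ ∀ x, idx (f x) = ε * idx x + c0 := by
  haveI := neZero_of_three_le hn
  have hA := mem_cayleyAut_iff.mp hf
  have hfinv : f⁻¹ ∈ cayleyAut (DihedralGroup n) (stdS n) :=
    (cayleyAut (DihedralGroup n) (stdS n)).inv_mem hf
  set c : ZMod n → ZMod n := fun i => idx (f (r i)) with hcdef
  have idxf : ∀ x, idx (f x) = c (idx x) := by
    intro x
    cases x with
    | r i => rfl
    | sr j => exact idx_apply_eq hn hodd hf (by simp)
  have cinj : Function.Injective c := by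
    intro i j hij
    have h1 : idx (f⁻¹ (f (r i))) = idx (f⁻¹ (f (r j))) := by
      apply idx_apply_eq hn hodd hfinv
      rw [idxf, idxf]; simpa using hij
    simpa using h1
  set ε : ZMod n := c 1 - c 0 with hεdef
  have hε : ε = 1 ∨ ε = -1 := by
    have h2 := (hA (r (0 : ZMod n)) (r 1)).mp (by left; simp)
    simp only [adj] at h2
    rcases h2 with h | h
    · left; rw [hεdef]; linear_combination h
    · right; rw [hεdef]; linear_combination h
  have step : ∀ i : ZMod n, c (i + 1) = c i + 1 ∨ c (i + 1) = c i - 1 := by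
    intro i
    have h2 := (hA (r i) (r (i + 1))).mp (by left; simp)
    simp only [adj] at h2
    rcases h2 with h | h
    · left; linear_combination h
    · right; linear_combination h
  have natrec : ∀ k : ℕ, c ((k : ZMod n)) = ε * (k : ZMod n) + c 0 ∧
      c ((k : ZMod n) + 1) = ε * ((k : ZMod n) + 1) + c 0 := by
    intro k
    induction k with
    | zero => refine ⟨by simp, by rw [hεdef]; push_cast; ring⟩
    | succ k ih =>
      obtain ⟨ih1, ih2⟩ := ih
      push_cast
      refine ⟨ih2, ?_⟩
      set m : ZMod n := (k : ZMod n) with hm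
      have hne : c (m + 1 + 1) ≠ c m := by
        intro hcc
        have := cinj hcc
        exact two_ne_zero' hn (by linear_combination this)
      rcases step (m + 1) with h | h <;> rcases hε with he | he
      · rw [h, ih2, he]; ring
      · exfalso; apply hne; rw [h, ih2, ih1, he]; ring
      · exfalso; apply hne; rw [h, ih2, ih1, he]; ring
      · rw [h, ih2, he]; ring
  have cfull : ∀ i : ZMod n, c i = ε * i + c 0 := by
    intro i
    have := (natrec i.val).1
    rwa [ZMod.natCast_rightInverse i] at this
  exact ⟨ε, c 0, hε, fun x => by rw [idxf, cfull]⟩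

end CayAux

namespace CayAux

variable {n : ℕ}

lemma mulRight_mem_cayleyAut (g : DihedralGroup n) :
    Equiv.mulRight g ∈ cayleyAut (DihedralGroup n) (stdS n) := by
  intro x y
  simp only [Equiv.coe_mulRight]
  rw [show y * g * (x * g)⁻¹ = y * x⁻¹ by group]

lemma idx_mul_r (x : DihedralGroup n) (c : ZMod n) : idx (x * r c) = idx x + c := by
  cases x <;> simp [r_mul_r, sr_mul_r] <;> ring

lemma idx_mul_sr (x : DihedralGroup n) (d : ZMod n) : idx (x * sr d) = -idx x + (d + 1) := by
  cases x <;> simp [r_mul_sr, sr_mul_sr] <;> ring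

lemma mem_block_iff (i : ZMod n) (x : DihedralGroup n) : x ∈ block n i ↔ idx x = i := by
  have hb : block n i = {r i, sr (-1 + i)} := by
    rw [block, r_mul_sr, sr_mul_r]
    norm_num
  rw [hb]
  cases x with
  | r j =>
    simp only [Set.mem_insert_iff, Set.mem_singleton_iff, idx_r]
    constructor
    · rintro (h | h) <;> simp_all
    · intro h; left; rw [h]
  | sr j =>
    simp only [Set.mem_insert_iff, Set.mem_singleton_iff, idx_sr]
    constructor
    · rintro (h | h)
      · simp at h
      · simp only [DihedralGroup.sr.injEq] at h; linear_combination h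
    · intro h; right; congr 1; linear_combination h

lemma mem_blockKernel_iff (f : Equiv.Perm (DihedralGroup n)) :
    f ∈ blockKernel n ↔ ∀ x, idx (f x) = idx x := by
  constructor
  · intro hf x
    obtain ⟨h1, h2⟩ := Subgroup.mem_inf.mp hf
    have h3 := Subgroup.mem_iInf.mp h2 (idx x)
    rw [MulAction.mem_stabilizer_iff] at h3
    have hx : x ∈ block n (idx x) := (mem_block_iff _ _).mpr rfl
    have : f • x ∈ f • block n (idx x) := Set.smul_mem_smul_set hx
    rw [h3] at this
    exact (mem_block_iff _ _).mp this
  · intro h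
    refine Subgroup.mem_inf.mpr ⟨?_, Subgroup.mem_iInf.mpr fun i => ?_⟩
    · intro x y
      rw [adj_iff, adj_iff]
      unfold adj
      rw [h, h]
    · rw [MulAction.mem_stabilizer_iff]
      ext y
      rw [Set.mem_smul_set_iff_inv_smul_mem]
      have hy : idx (f⁻¹ y) = idx y := by
        conv_rhs => rw [show y = f (f⁻¹ y) from (Equiv.apply_symm_apply f y).symm]
        exact (h _).symm
      rw [mem_block_iff, mem_block_iff]
      have : f⁻¹ • y = f⁻¹ y := rfl
      rw [this, hy]

lemma blockKernel_le : blockKernel n ≤ cayleyAut (DihedralGroup n) (stdS n) := inf_le_left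

/-- The decomposition `Aut(Γ) = K · R(D₂ₙ)`. -/
lemma decomp (hn : 3 ≤ n) (hodd : Odd n) (f : Equiv.Perm (DihedralGroup n)) :
    f ∈ cayleyAut (DihedralGroup n) (stdS n) ↔
      ∃ k ∈ blockKernel n, ∃ g : DihedralGroup n, f = k * Equiv.mulRight g := by
  constructor
  · intro hf
    obtain ⟨ε, c0, hε, hspec⟩ := master hn hodd hf
    set g : DihedralGroup n := if ε = 1 then r c0 else sr (c0 - 1) with hg
    have hidxg : ∀ x, idx (x * g) = ε * idx x + c0 := by
      intro x
      rcases hε with he | he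
      · rw [hg, if_pos he, idx_mul_r, he]; ring
      · rw [hg, if_neg (he ▸ neg_one_ne_one' hn), idx_mul_sr, he]; ring
    refine ⟨f * (Equiv.mulRight g)⁻¹, ?_, g, by group⟩
    rw [mem_blockKernel_iff]
    intro x
    have hinv : (Equiv.mulRight g)⁻¹ x = x * g⁻¹ := by
      simp [Equiv.Perm.inv_def]
    have h1 : idx (x * g⁻¹ * g) = ε * idx (x * g⁻¹) + c0 := hidxg _
    rw [inv_mul_cancel_right] at h1
    have h2 : (f * (Equiv.mulRight g)⁻¹) x = f (x * g⁻¹) := by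
      rw [Equiv.Perm.mul_apply, hinv]
    rw [h2, hspec, ← h1]
  · rintro ⟨k, hk, g, rfl⟩
    exact Subgroup.mul_mem _ (blockKernel_le hk) (mulRight_mem_cayleyAut g)

/-- `K ∩ R(D₂ₙ) = 1`. -/
lemma inter_trivial (hn : 3 ≤ n) (f : Equiv.Perm (DihedralGroup n))
    (hK : f ∈ blockKernel n) (hR : f ∈ rightRegRep (DihedralGroup n)) : f = 1 := by
  obtain ⟨g, rfl⟩ := hR
  have h := (mem_blockKernel_iff _).mp hK
  have happ : ∀ x : DihedralGroup n, (rightRegHom (DihedralGroup n) g) x = x * g⁻¹ := fun x => rfl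
  suffices hg : g⁻¹ = 1 by
    have : g = 1 := by rwa [inv_eq_one] at hg
    rw [this, map_one]
  cases hu : g⁻¹ with
  | r i =>
    rw [one_def]
    have h0 := h (r 0)
    rw [happ, hu, r_mul_r] at h0
    simp only [idx_r, zero_add] at h0
    rw [h0]
  | sr i =>
    exfalso
    have h0 := h (r 0)
    have h1 := h (r 1)
    rw [happ, hu, r_mul_sr] at h0 h1
    simp only [idx_r, idx_sr] at h0 h1
    exact two_ne_zero' hn (by linear_combination h0 - h1)

end CayAux

namespace CayAux

variable {n : ℕ}

lemma opt {f : Equiv.Perm (DihedralGroup n)} (hf : f ∈ blockKernel n) (x : DihedralGroup n) :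
    f x = x ∨ f x = tw x :=
  eq_or_eq_tw_of_idx_eq ((mem_blockKernel_iff f).mp hf x)

lemma coh {f : Equiv.Perm (DihedralGroup n)} (hf : f ∈ blockKernel n) (x : DihedralGroup n)
    (h : f x = x) : f (tw x) = tw x := by
  rcases opt hf (tw x) with h1 | h1
  · exact h1
  · exfalso
    rw [tw_tw] at h1
    exact tw_ne x (f.injective (h1.trans h.symm))

lemma anticoh {f : Equiv.Perm (DihedralGroup n)} (hf : f ∈ blockKernel n) (x : DihedralGroup n)
    (h : f x = tw x) : f (tw x) = x := by
  rcases opt hf (tw x) with h1 | h1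
  · exfalso
    exact tw_ne x (f.injective (h1.trans h.symm))
  · rwa [tw_tw] at h1

/-- The involutive permutation determined by a vector of flips. -/
def flips (c : ZMod n → Multiplicative (ZMod 2)) : Equiv.Perm (DihedralGroup n) :=
  Function.Involutive.toPerm (fun x => if c (idx x) = 1 then x else tw x) (by
    intro x
    by_cases h : c (idx x) = 1 <;> simp [h, idx_tw, tw_tw])

lemma flips_apply (c : ZMod n → Multiplicative (ZMod 2)) (x : DihedralGroup n) :
    flips c x = if c (idx x) = 1 then x else tw x := rfl

lemma flips_mem (c : ZMod n → Multiplicative (ZMod 2)) : flips c ∈ blockKernel n := by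
  rw [mem_blockKernel_iff]
  intro x
  rw [flips_apply]
  by_cases h : c (idx x) = 1 <;> simp [h, idx_tw]

lemma mult_cases (z : Multiplicative (ZMod 2)) : z = 1 ∨ z = Multiplicative.ofAdd 1 := by
  revert z; decide

lemma mult_add : (Multiplicative.ofAdd (1 : ZMod 2)) * Multiplicative.ofAdd (1 : ZMod 2) = 1 := by
  decide

lemma mult_ne : (Multiplicative.ofAdd (1 : ZMod 2)) ≠ 1 := by decide

/-- `K ≅ (ZMod n → Z₂)`. -/
def kEquiv : blockKernel n ≃* (ZMod n → Multiplicative (ZMod 2)) where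
  toFun f := fun i => if (f : Equiv.Perm (DihedralGroup n)) (r i) = r i then 1
    else Multiplicative.ofAdd 1
  invFun c := ⟨flips c, flips_mem c⟩
  left_inv f := by
    apply Subtype.ext
    apply Equiv.ext
    intro x
    show flips (fun i => if (f : Equiv.Perm (DihedralGroup n)) (r i) = r i then 1
      else Multiplicative.ofAdd 1) x = (f : Equiv.Perm (DihedralGroup n)) x
    rw [flips_apply]
    cases x with
    | r i =>
      by_cases h : (f : Equiv.Perm (DihedralGroup n)) (r i) = r i
      · simp [h]
      · rcases opt f.2 (r i) with h1 | h1
        · exact absurd h1 h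
        · simp [h, mult_ne, h1]
    | sr j =>
      have htw : tw (r (j + 1)) = sr j := by rw [tw_r, add_sub_cancel_right]
      by_cases h : (f : Equiv.Perm (DihedralGroup n)) (r (j + 1)) = r (j + 1)
      · have hs : (f : Equiv.Perm (DihedralGroup n)) (sr j) = sr j := by
          rw [← htw]; exact coh f.2 _ h
        simp [h, hs]
      · rcases opt f.2 (r (j + 1)) with h1 | h1
        · exact absurd h1 h
        · have hs : (f : Equiv.Perm (DihedralGroup n)) (sr j) = r (j + 1) := by
            rw [← htw]
            exact anticoh f.2 _ h1
          simp only [idx_sr, if_neg h, if_neg mult_ne]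
          rw [hs, tw_sr]
          simp [h, mult_ne]
  right_inv c := by
    funext i
    show (if flips c (r i) = r i then (1 : Multiplicative (ZMod 2))
      else Multiplicative.ofAdd 1) = c i
    rcases mult_cases (c i) with h | h
    · simp [flips_apply, h]
    · have : flips c (r i) = sr (i - 1) := by
        rw [flips_apply, idx_r, h, if_neg mult_ne, tw_r]
      simp [this, h]
  map_mul' f g := by
    funext i
    simp only [Pi.mul_apply]
    have hmul : ((f * g : blockKernel n) : Equiv.Perm (DihedralGroup n)) (r i)
        = (f : Equiv.Perm (DihedralGroup n)) ((g : Equiv.Perm (DihedralGroup n)) (r i)) := rfl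
    rw [hmul]
    rcases opt g.2 (r i) with hg | hg <;> rcases opt f.2 (r i) with hf' | hf'
    · rw [hg, hf']
      simp
    · rw [hg, hf', if_neg (tw_ne _)]
      simp
    · have hc := coh f.2 (r i) hf'
      rw [hg, hc, hf', if_neg (tw_ne _)]
      simp
    · have hc := anticoh f.2 (r i) hf'
      rw [hg, hc, hf', if_pos rfl, if_neg (tw_ne _)]
      decide

end CayAux

namespace CayAux

variable {n : ℕ}

/-- `Fin n ≃ ZMod n`. -/
def finEquiv [NeZero n] : Fin n ≃ ZMod n where
  toFun i := ((i : ℕ) : ZMod n)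
  invFun j := ⟨j.val, ZMod.val_lt j⟩
  left_inv i := Fin.ext (ZMod.val_cast_of_lt i.isLt)
  right_inv j := ZMod.natCast_rightInverse j

/-- `K ≅ Z₂ⁿ` with index set `Fin n`. -/
noncomputable def fullKEquiv [NeZero n] :
    blockKernel n ≃* (Fin n → Multiplicative (ZMod 2)) :=
  kEquiv.trans (MulEquiv.arrowCongr (finEquiv (n := n)) (MulEquiv.refl _)).symm

lemma card_K [NeZero n] : Nat.card (blockKernel n) = 2 ^ n := by
  rw [Nat.card_congr (fullKEquiv (n := n)).toEquiv, Nat.card_fun,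
    Nat.card_congr (Multiplicative.toAdd (α := ZMod 2)), Nat.card_zmod,
    Nat.card_eq_fintype_card, Fintype.card_fin]

/-- The bijection `K × D₂ₙ ≃ Aut(Γ)`. -/
lemma card_aut (hn : 3 ≤ n) (hodd : Odd n) :
    Nat.card (cayleyAut (DihedralGroup n) (stdS n)) = 2 ^ (n + 1) * n := by
  haveI := neZero_of_three_le hn
  set A := cayleyAut (DihedralGroup n) (stdS n) with hA
  have hmem : ∀ p : blockKernel n × DihedralGroup n,
      ((p.1 : Equiv.Perm (DihedralGroup n)) * Equiv.mulRight p.2) ∈ A :=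
    fun p => Subgroup.mul_mem _ (blockKernel_le p.1.2) (mulRight_mem_cayleyAut p.2)
  set Phi : blockKernel n × DihedralGroup n → A :=
    fun p => ⟨(p.1 : Equiv.Perm (DihedralGroup n)) * Equiv.mulRight p.2, hmem p⟩ with hPhi
  have hbij : Function.Bijective Phi := by
    constructor
    · rintro ⟨k1, g1⟩ ⟨k2, g2⟩ hp
      have heq : (k1 : Equiv.Perm (DihedralGroup n)) * Equiv.mulRight g1
          = (k2 : Equiv.Perm (DihedralGroup n)) * Equiv.mulRight g2 :=
        congrArg Subtype.val hp
      have hmr : Equiv.mulRight g2 * (Equiv.mulRight g1)⁻¹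
          = Equiv.mulRight (g1⁻¹ * g2) := by
        apply Equiv.ext
        intro x
        simp [Equiv.Perm.mul_apply, Equiv.Perm.inv_def, mul_assoc]
      have hk : (k2 : Equiv.Perm (DihedralGroup n))⁻¹ * (k1 : Equiv.Perm (DihedralGroup n))
          = Equiv.mulRight (g1⁻¹ * g2) := by
        rw [← hmr]
        have : (k1 : Equiv.Perm (DihedralGroup n))
            = (k2 : Equiv.Perm (DihedralGroup n)) * Equiv.mulRight g2 * (Equiv.mulRight g1)⁻¹ := by
          rw [← heq]; group
        rw [this]; group
      have hKmem : (k2 : Equiv.Perm (DihedralGroup n))⁻¹ * (k1 : Equiv.Perm (DihedralGroup n))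
          ∈ blockKernel n := Subgroup.mul_mem _ (Subgroup.inv_mem _ k2.2) k1.2
      have hRmem : (k2 : Equiv.Perm (DihedralGroup n))⁻¹ * (k1 : Equiv.Perm (DihedralGroup n))
          ∈ rightRegRep (DihedralGroup n) := by
        rw [hk]
        exact ⟨(g1⁻¹ * g2)⁻¹, by simp [rightRegHom]⟩
      have h1 := inter_trivial hn _ hKmem hRmem
      have hg : g1 = g2 := by
        have h2 : Equiv.mulRight (g1⁻¹ * g2) = 1 := by rw [← hk, h1]
        have h3 : (1 : DihedralGroup n) * (g1⁻¹ * g2) = 1 := by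
          have := congrArg (fun (e : Equiv.Perm (DihedralGroup n)) => e 1) h2
          simpa using this
        rw [one_mul] at h3
        exact (inv_mul_eq_one.mp h3)
      have hkk : k1 = k2 := by
        apply Subtype.ext
        have : (k2 : Equiv.Perm (DihedralGroup n))⁻¹ * (k1 : Equiv.Perm (DihedralGroup n)) = 1 := h1
        calc (k1 : Equiv.Perm (DihedralGroup n))
            = (k2 : Equiv.Perm (DihedralGroup n)) * ((k2 : Equiv.Perm (DihedralGroup n))⁻¹
              * (k1 : Equiv.Perm (DihedralGroup n))) := by group
          _ = (k2 : Equiv.Perm (DihedralGroup n)) := by rw [this, mul_one]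
      rw [hkk, hg]
    · rintro ⟨f, hf⟩
      obtain ⟨k, hk, g, hfkg⟩ := (decomp hn hodd f).mp hf
      exact ⟨(⟨k, hk⟩, g), Subtype.ext hfkg.symm⟩
  rw [← Nat.card_eq_of_bijective Phi hbij, Nat.card_prod, card_K, DihedralGroup.nat_card]
  ring

end CayAux

namespace CayAux

variable {n : ℕ}

/-- The orientation of an automorphism. -/
def eps (f : cayleyAut (DihedralGroup n) (stdS n)) : ZMod n :=
  idx ((f : Equiv.Perm (DihedralGroup n)) (r 1)) - idx ((f : Equiv.Perm (DihedralGroup n)) (r 0))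

lemma eps_spec {f : cayleyAut (DihedralGroup n) (stdS n)} {ε c0 : ZMod n}
    (h : ∀ x, idx ((f : Equiv.Perm (DihedralGroup n)) x) = ε * idx x + c0) : eps f = ε := by
  rw [eps, h, h]
  simp

lemma eps_pm (hn : 3 ≤ n) (hodd : Odd n) (f : cayleyAut (DihedralGroup n) (stdS n)) :
    eps f = 1 ∨ eps f = -1 := by
  obtain ⟨ε, c0, hε, hspec⟩ := master hn hodd f.2
  rw [eps_spec hspec]
  exact hε

lemma eps_mul (hn : 3 ≤ n) (hodd : Odd n) (f g : cayleyAut (DihedralGroup n) (stdS n)) :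
    eps (f * g) = eps f * eps g := by
  obtain ⟨ε, c0, hε, hspec⟩ := master hn hodd f.2
  have hf : eps f = ε := eps_spec hspec
  have h1 : eps (f * g) =
      idx ((f : Equiv.Perm (DihedralGroup n)) ((g : Equiv.Perm (DihedralGroup n)) (r 1)))
      - idx ((f : Equiv.Perm (DihedralGroup n)) ((g : Equiv.Perm (DihedralGroup n)) (r 0))) := rfl
  rw [h1, hspec, hspec, hf, eps]
  ring

/-- `if`-encoding of the sign into `Z₂`. -/
def q (z : ZMod n) : Multiplicative (ZMod 2) :=
  Multiplicative.ofAdd (if z = 1 then 0 else 1)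

lemma q_one : q (1 : ZMod n) = Multiplicative.ofAdd 0 := by rw [q, if_pos rfl]

lemma q_neg_one (hn : 3 ≤ n) : q (-1 : ZMod n) = Multiplicative.ofAdd 1 := by
  rw [q, if_neg (neg_one_ne_one' hn)]

/-- The orientation homomorphism. -/
def epsHom (hn : 3 ≤ n) (hodd : Odd n) :
    cayleyAut (DihedralGroup n) (stdS n) →* Multiplicative (ZMod 2) :=
  MonoidHom.mk' (fun f => q (eps f)) (by
    intro f g
    show q (eps (f * g)) = q (eps f) * q (eps g)
    rw [eps_mul hn hodd f g]
    rcases eps_pm hn hodd f with h1 | h1 <;> rcases eps_pm hn hodd g with h2 | h2 <;>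
      rw [h1, h2]
    · rw [one_mul, q_one]; decide
    · rw [one_mul, q_one, q_neg_one hn]; decide
    · rw [mul_one, q_one, q_neg_one hn]; decide
    · rw [neg_mul_neg, one_mul, q_one, q_neg_one hn]; decide)

lemma solvable_aut (hn : 3 ≤ n) (hodd : Odd n) :
    IsSolvable (cayleyAut (DihedralGroup n) (stdS n)) := by
  haveI := neZero_of_three_le hn
  set A := cayleyAut (DihedralGroup n) (stdS n) with hAdef
  set E : A →* Multiplicative (ZMod 2) := epsHom hn hodd with hEdef
  have hEeps : ∀ f : A, f ∈ E.ker → eps f = 1 := by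
    intro f hf
    rcases eps_pm hn hodd f with h | h
    · exact h
    · exfalso
      have h1 : E f = 1 := hf
      have h2 : E f = q (eps f) := rfl
      rw [h2, h, q_neg_one hn] at h1
      exact mult_ne h1
  -- the translation homomorphism on the kernel of E
  set C : E.ker →* Multiplicative (ZMod n) :=
    MonoidHom.mk' (fun f => Multiplicative.ofAdd
        (idx (((f : A) : Equiv.Perm (DihedralGroup n)) (r 0)))) (by
        intro f g
        show Multiplicative.ofAdd _ = Multiplicative.ofAdd _ * Multiplicative.ofAdd _
        obtain ⟨ε, c0, hε, hspec⟩ := master hn hodd (f : A).2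
        have he1 : ε = 1 := by rw [← eps_spec hspec]; exact hEeps _ f.2
        have hc0 : c0 = idx (((f : A) : Equiv.Perm (DihedralGroup n)) (r 0)) := by
          rw [hspec (r 0)]
          simp
        have hmul : (((f * g : E.ker) : A) : Equiv.Perm (DihedralGroup n)) (r 0)
            = ((f : A) : Equiv.Perm (DihedralGroup n))
              (((g : A) : Equiv.Perm (DihedralGroup n)) (r 0)) := rfl
        simp only [hmul]
        rw [hspec, he1, ← hc0]
        rw [← ofAdd_add]
        congr 1
        ring) with hCdef
  -- K sits inside ker E
  have hKA : (blockKernel n).subgroupOf A ≤ E.ker := by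
    intro f hf
    have hK : (f : Equiv.Perm (DihedralGroup n)) ∈ blockKernel n :=
      Subgroup.mem_subgroupOf.mp hf
    have hidx := (mem_blockKernel_iff _).mp hK
    show E f = 1
    have h2 : E f = q (eps f) := rfl
    have h3 : eps f = 1 := by rw [eps, hidx, hidx]; simp
    rw [h2, h3, q_one]
    rfl
  haveI hsolvK : Group.IsSolvable ((blockKernel n).subgroupOf A) := by
    have e1 : (blockKernel n).subgroupOf A ≃* blockKernel n :=
      Subgroup.subgroupOfEquivOfLe blockKernel_le
    have e2 : blockKernel n ≃* (Fin n → Multiplicative (ZMod 2)) := fullKEquiv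
    haveI : Group.IsSolvable (Fin n → Multiplicative (ZMod 2)) := inferInstance
    haveI : Group.IsSolvable (blockKernel n) :=
      solvable_of_surjective (f := e2.symm.toMonoidHom) e2.symm.surjective
    exact solvable_of_surjective (f := e1.symm.toMonoidHom) e1.symm.surjective
  haveI hsolvG1 : Group.IsSolvable E.ker := by
    apply solvable_of_ker_le_range (Subgroup.inclusion hKA) C
    intro f hf
    have hC1 : C f = 1 := hf
    have hidx0 : idx (((f : A) : Equiv.Perm (DihedralGroup n)) (r 0)) = 0 := by
      have := congrArg Multiplicative.toAdd hC1
      simpa [hCdef] using this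
    obtain ⟨ε, c0, hε, hspec⟩ := master hn hodd (f : A).2
    have he1 : ε = 1 := by rw [← eps_spec hspec]; exact hEeps _ f.2
    have hc0 : c0 = 0 := by
      have := hspec (r 0)
      rw [hidx0] at this
      simpa using this.symm
    have hKmem : ((f : A) : Equiv.Perm (DihedralGroup n)) ∈ blockKernel n := by
      rw [mem_blockKernel_iff]
      intro x
      rw [hspec, he1, hc0]
      ring
    have : (f : A) ∈ (blockKernel n).subgroupOf A := Subgroup.mem_subgroupOf.mpr hKmem
    exact ⟨⟨(f : A), this⟩, rfl⟩
  exact solvable_of_ker_le_range E.ker.subtype E (le_of_eq (Subgroup.range_subtype E.ker).symm)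

end CayAux

/-- Let `n ≥ 3` be odd, `S = {a, a⁻¹, a²b, b}` and `Γ = Cay(D_{2n}, S)`. Then
`Aut(Γ) = K·R(D_{2n})` where `K ≅ Z₂ⁿ` is the kernel of the action of `Aut(Γ)` on
the blocks `⟨ab⟩aⁱ`, `K ∩ R(D_{2n}) = 1`, `|Aut(Γ)| = 2^{n+1}·n`, and `Aut(Γ)` is
soluble. -/
theorem cayley_dihedral_aut_structure (n : ℕ) (hn : 3 ≤ n) (hodd : Odd n) :
    (∀ f : Equiv.Perm (DihedralGroup n),
      f ∈ cayleyAut (DihedralGroup n) (stdS n) ↔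
        ∃ k ∈ blockKernel n, ∃ g : DihedralGroup n, f = k * Equiv.mulRight g) ∧
    Nonempty (blockKernel n ≃* (Fin n → Multiplicative (ZMod 2))) ∧
    (∀ f, f ∈ blockKernel n → f ∈ rightRegRep (DihedralGroup n) → f = 1) ∧
    Nat.card (cayleyAut (DihedralGroup n) (stdS n)) = 2 ^ (n + 1) * n ∧
    IsSolvable (cayleyAut (DihedralGroup n) (stdS n)) := by
  haveI := CayAux.neZero_of_three_le hn
  exact ⟨CayAux.decomp hn hodd, ⟨CayAux.fullKEquiv⟩,
    fun f hK hR => CayAux.inter_trivial hn f hK hR,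
    CayAux.card_aut hn hodd, CayAux.solvable_aut hn hodd⟩
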